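/- Let G be a finite abelian group, H a subgroup of G, ψ : H → ℂˣ a group homomorphism, and λ ∈ ℂ[G]. Then ψ(N_{G/H}(λ)) = ∏_{φ} φ(λ), where the product is over all group homomorphisms φ : G → ℂˣ whose restriction to H equals ψ, and where ψ : ℂ[H] → ℂ and φ : ℂ[G] → ℂ denote the induced ℂ-algebra homomorphisms. -/

import Mathlib

/-- The norm map `N_{G/H} : ℂ[G] → ℂ[H]`: the determinant, over `ℂ[H]`, of the `ℂ[H]`-linear
endomorphism of `ℂ[G]` given by multiplication by `λ`, where `ℂ[G]` is a `ℂ[H]`-module via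
the inclusion-induced ring homomorphism `ℂ[H] → ℂ[G]`. -/
noncomputable def grpNorm (G : Type*) [CommGroup G] (H : Subgroup G)
    (lam : MonoidAlgebra ℂ G) : MonoidAlgebra ℂ ↥H :=
  letI : Algebra (MonoidAlgebra ℂ ↥H) (MonoidAlgebra ℂ G) :=
    (MonoidAlgebra.mapDomainRingHom ℂ H.subtype).toAlgebra
  LinearMap.det (LinearMap.mulLeft (MonoidAlgebra ℂ ↥H) lam)

/-- The `ℂ`-algebra homomorphism `ℂ[Γ] → ℂ` induced by a character `χ : Γ → ℂˣ`. -/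
noncomputable def charAlgHom (Γ : Type*) [CommGroup Γ] (χ : Γ →* ℂˣ) :
    MonoidAlgebra ℂ Γ →ₐ[ℂ] ℂ :=
  MonoidAlgebra.lift ℂ ℂ Γ ((Units.coeHom ℂ).comp χ)

/-! ### Auxiliary lemmas -/

lemma charAlgHom_single (Γ : Type*) [CommGroup Γ] (χ : Γ →* ℂˣ) (g : Γ) (c : ℂ) :
    charAlgHom Γ χ (MonoidAlgebra.single g c) = c * χ g := by
  simp [charAlgHom, MonoidAlgebra.lift_single]

section basis

variable {G : Type*} [CommGroup G] (H : Subgroup G)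

lemma mdrh_single (h : ↥H) (c : ℂ) :
    MonoidAlgebra.mapDomainRingHom ℂ H.subtype (MonoidAlgebra.single h c) =
      MonoidAlgebra.single (h : G) c :=
  MonoidAlgebra.mapDomain_single

lemma charAlgHom_mdrh (φ : G →* ℂˣ) (ψ : ↥H →* ℂˣ) (hφ : φ.comp H.subtype = ψ)
    (c : MonoidAlgebra ℂ ↥H) :
    charAlgHom G φ (MonoidAlgebra.mapDomainRingHom ℂ H.subtype c) = charAlgHom ↥H ψ c := by
  induction c using MonoidAlgebra.induction_linear with
  | zero => simp
  | add f g hf hg => rw [map_add, map_add, map_add, hf, hg]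
  | single h a =>
    rw [mdrh_single, charAlgHom_single, charAlgHom_single, ← hφ]
    rfl

lemma mem_of_mul_out_inv (g : G) : g * (((g : G ⧸ H)).out)⁻¹ ∈ H := by
  have h1 : ((g : G ⧸ H).out : G ⧸ H) = (g : G ⧸ H) := QuotientGroup.out_eq' _
  have h2 := (QuotientGroup.eq (s := H)).mp h1
  simpa [mul_comm] using h2

noncomputable instance algGH : Algebra (MonoidAlgebra ℂ ↥H) (MonoidAlgebra ℂ G) :=
  (MonoidAlgebra.mapDomainRingHom ℂ H.subtype).toAlgebra

lemma smul_eq_mdrh_mul (c : MonoidAlgebra ℂ ↥H) (x : MonoidAlgebra ℂ G) :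
    c • x = MonoidAlgebra.mapDomainRingHom ℂ H.subtype c * x := by
  rw [Algebra.smul_def, RingHom.algebraMap_toAlgebra]

lemma smul_single_apply (c : MonoidAlgebra ℂ ↥H) (a g : G) :
    (c • (MonoidAlgebra.single a 1 : MonoidAlgebra ℂ G)).coeff g =
      Finsupp.mapDomain (H.subtype) c.coeff (g * a⁻¹) := by
  rw [smul_eq_mdrh_mul]
  have := MonoidAlgebra.coeff_mul_single_apply
    (MonoidAlgebra.mapDomainRingHom ℂ H.subtype c) (1 : ℂ) a g
  rw [mul_one] at this
  exact this

lemma cosetBasis_li :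
    LinearIndependent (MonoidAlgebra ℂ ↥H)
      (fun q : G ⧸ H => (MonoidAlgebra.single q.out 1 : MonoidAlgebra ℂ G)) := by
  classical
  rw [linearIndependent_iff]
  intro l hl
  have key : ∀ (q : G ⧸ H) (h : ↥H), (l q).coeff h = 0 := by
    intro q h
    have h1 : (Finsupp.linearCombination (MonoidAlgebra ℂ ↥H)
        (fun q : G ⧸ H => (MonoidAlgebra.single q.out 1 : MonoidAlgebra ℂ G)) l).coeff
        ((h : G) * q.out) = 0 := by rw [hl]; simp
    rw [Finsupp.linearCombination_apply, MonoidAlgebra.coeff_finsuppSum, Finsupp.sum_apply] at h1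
    rw [Finsupp.sum_eq_single q (g := fun q' c => (c • (MonoidAlgebra.single q'.out 1 :
        MonoidAlgebra ℂ G)).coeff ((h : G) * q.out))] at h1
    · rw [smul_single_apply, mul_inv_cancel_right] at h1
      rw [← Finsupp.mapDomain_apply H.subtype_injective (l q).coeff h]
      exact h1
    · intro q' _ hq'
      rw [smul_single_apply, Finsupp.mapDomain_notin_range]
      rintro ⟨h', hh'⟩
      apply hq'
      have hmem : (q'.out)⁻¹ * q.out ∈ H := by
        have h3 : ((h : G) * q.out * q'.out⁻¹) ∈ H := hh' ▸ h'.2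
        have h4 := H.mul_mem (H.inv_mem h.2) h3
        rw [← mul_assoc, inv_mul_cancel_left] at h4
        simpa [mul_comm] using h4
      have h5 := (QuotientGroup.eq (s := H)).mpr hmem
      rwa [QuotientGroup.out_eq', QuotientGroup.out_eq'] at h5
    · intro _; simp
  ext q h
  exact key q h

lemma cosetBasis_span :
    ⊤ ≤ Submodule.span (MonoidAlgebra ℂ ↥H)
      (Set.range fun q : G ⧸ H => (MonoidAlgebra.single q.out 1 : MonoidAlgebra ℂ G)) := by
  intro x hx
  clear hx
  induction x using MonoidAlgebra.induction with
  | zero => exact Submodule.zero_mem _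
  | single_add g c f _ _ ih =>
    refine Submodule.add_mem _ ?_ ih
    have key : (MonoidAlgebra.single g c : MonoidAlgebra ℂ G) =
        (MonoidAlgebra.single (⟨g * ((g : G ⧸ H)).out⁻¹, mem_of_mul_out_inv H g⟩ : ↥H) c :
          MonoidAlgebra ℂ ↥H) • (MonoidAlgebra.single ((g : G ⧸ H)).out 1 :
          MonoidAlgebra ℂ G) := by
      rw [smul_eq_mdrh_mul, mdrh_single, MonoidAlgebra.single_mul_single,
        inv_mul_cancel_right, mul_one]
    show (MonoidAlgebra.single g c : MonoidAlgebra ℂ G) ∈ _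
    rw [key]
    exact Submodule.smul_mem _ _ (Submodule.subset_span ⟨(g : G ⧸ H), rfl⟩)

/-- The coset representatives form a basis of `ℂ[G]` over `ℂ[H]`. -/
noncomputable def cosetBasis : Module.Basis (G ⧸ H) (MonoidAlgebra ℂ ↥H) (MonoidAlgebra ℂ G) :=
  Module.Basis.mk (cosetBasis_li H) (cosetBasis_span H)

lemma cosetBasis_apply (q : G ⧸ H) :
    cosetBasis H q = (MonoidAlgebra.single q.out 1 : MonoidAlgebra ℂ G) := by
  rw [cosetBasis, Module.Basis.mk_apply]

end basis

section counting

lemma charGroup_finite (Γ : Type*) [CommGroup Γ] [Finite Γ] : Finite (Γ →* ℂˣ) := by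
  haveI : NeZero ((Monoid.exponent Γ : ℂ)) :=
    ⟨Nat.cast_ne_zero.mpr Monoid.exponent_ne_zero_of_finite⟩
  obtain ⟨e⟩ := CommGroup.monoidHom_mulEquiv_of_hasEnoughRootsOfUnity Γ ℂ
  exact Finite.of_equiv Γ e.toEquiv.symm

lemma charGroup_card (Γ : Type*) [CommGroup Γ] [Finite Γ] :
    Nat.card (Γ →* ℂˣ) = Nat.card Γ := by
  haveI : NeZero ((Monoid.exponent Γ : ℂ)) :=
    ⟨Nat.cast_ne_zero.mpr Monoid.exponent_ne_zero_of_finite⟩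
  obtain ⟨e⟩ := CommGroup.monoidHom_mulEquiv_of_hasEnoughRootsOfUnity Γ ℂ
  exact Nat.card_congr e.toEquiv

lemma card_extensions {G : Type*} [CommGroup G] [Finite G] (H : Subgroup G) (ψ : ↥H →* ℂˣ) :
    Nat.card {φ : G →* ℂˣ // φ.comp H.subtype = ψ} = Nat.card (G ⧸ H) := by
  haveI := charGroup_finite G
  haveI := charGroup_finite ↥H
  haveI := charGroup_finite (G ⧸ H)
  set res : (G →* ℂˣ) →* (↥H →* ℂˣ) :=
    { toFun := fun φ => φ.comp H.subtype
      map_one' := by ext; simp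
      map_mul' := fun _ _ => by ext; simp } with hres
  have htriv : (QuotientGroup.mk' H).comp H.subtype = 1 := by
    ext h
    simp [(QuotientGroup.eq_one_iff (h : G)).mpr h.2]
  have hmemj : ∀ χ : (G ⧸ H) →* ℂˣ, χ.comp (QuotientGroup.mk' H) ∈ res.ker := by
    intro χ
    rw [MonoidHom.mem_ker]
    show (χ.comp (QuotientGroup.mk' H)).comp H.subtype = 1
    rw [MonoidHom.comp_assoc, htriv, MonoidHom.comp_one]
  have hj : Function.Bijective
      (fun χ : (G ⧸ H) →* ℂˣ => (⟨χ.comp (QuotientGroup.mk' H), hmemj χ⟩ : res.ker)) := by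
    constructor
    · intro χ₁ χ₂ h12
      have := congrArg (fun x : res.ker => x.1) h12
      exact (MonoidHom.cancel_right (QuotientGroup.mk'_surjective H)).mp this
    · rintro ⟨φ, hφ⟩
      have hker : H ≤ φ.ker := by
        intro x hx
        have : φ.comp H.subtype ⟨x, hx⟩ = 1 := by
          rw [show φ.comp H.subtype = res φ from rfl, hφ]; rfl
        simpa using this
      refine ⟨QuotientGroup.lift H φ hker, ?_⟩
      apply Subtype.ext
      ext g
      simp
  have hkercard : Nat.card res.ker = Nat.card (G ⧸ H) := by
    rw [← Nat.card_congr (Equiv.ofBijective _ hj), charGroup_card]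
  have hsurj : Function.Surjective res := by
    rw [← MonoidHom.range_eq_top]
    apply Subgroup.eq_top_of_card_eq
    have h3 := Subgroup.card_eq_card_quotient_mul_card_subgroup res.ker
    rw [charGroup_card, hkercard, Nat.card_congr (QuotientGroup.quotientKerEquivRange res).toEquiv,
      Subgroup.card_eq_card_quotient_mul_card_subgroup H, mul_comm (Nat.card (G ⧸ H))] at h3
    have hpos : 0 < Nat.card (G ⧸ H) := Nat.card_pos
    have := Nat.eq_of_mul_eq_mul_right hpos h3.symm
    rw [this, charGroup_card]
  obtain ⟨φ₀, hφ₀⟩ := hsurj ψ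
  have e2 : res.ker ≃ {φ : G →* ℂˣ // φ.comp H.subtype = ψ} :=
    (Equiv.mulLeft φ₀).subtypeEquiv (fun κ => by
      constructor
      · intro hκ
        show res (φ₀ * κ) = ψ
        rw [map_mul, hφ₀, MonoidHom.mem_ker.mp hκ, mul_one]
      · intro hκ
        rw [MonoidHom.mem_ker]
        have h2 : res (φ₀ * κ) = ψ := hκ
        rw [map_mul, hφ₀] at h2
        exact (mul_eq_left (a := ψ) (b := res κ)).mp h2)
  rw [← Nat.card_congr e2, hkercard]

end counting

/-- Let `G` be a finite abelian group, `H ≤ G`, `ψ : H → ℂˣ` a group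
homomorphism and `λ ∈ ℂ[G]`.  Then `ψ(N_{G/H}(λ)) = ∏_φ φ(λ)`, the (finite) product running
over all group homomorphisms `φ : G → ℂˣ` whose restriction to `H` is `ψ`. -/
theorem stmt12 (G : Type*) [CommGroup G] [Finite G] (H : Subgroup G) (ψ : ↥H →* ℂˣ)
    (lam : MonoidAlgebra ℂ G) :
    charAlgHom ↥H ψ (grpNorm G H lam) =
      ∏ᶠ (φ : G →* ℂˣ) (_ : φ.comp H.subtype = ψ), charAlgHom G φ lam := by
  classical
  letI : Fintype (G ⧸ H) := Fintype.ofFinite _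
  haveI : Finite (G →* ℂˣ) := charGroup_finite G
  letI : Fintype (G →* ℂˣ) := Fintype.ofFinite _
  set b : Module.Basis (G ⧸ H) (MonoidAlgebra ℂ ↥H) (MonoidAlgebra ℂ G) := cosetBasis H with hb
  set A : Matrix (G ⧸ H) (G ⧸ H) (MonoidAlgebra ℂ ↥H) :=
    LinearMap.toMatrix b b (LinearMap.mulLeft (MonoidAlgebra ℂ ↥H) lam) with hA
  set M : Matrix (G ⧸ H) (G ⧸ H) ℂ := A.map (charAlgHom ↥H ψ) with hM
  -- the left-hand side is the determinant of `M`
  have hLHS : charAlgHom ↥H ψ (grpNorm G H lam) = M.det := by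
    have h0 : grpNorm G H lam = A.det := (LinearMap.det_toMatrix b _).symm
    rw [h0, hM]
    exact RingHom.map_det ((charAlgHom ↥H ψ) : MonoidAlgebra ℂ ↥H →+* ℂ) A
  -- characters applied to the basis vectors
  have hbq : ∀ (φ : G →* ℂˣ) (q : G ⧸ H),
      charAlgHom G φ (b q) = ((φ q.out : ℂ)) := by
    intro φ q
    rw [hb, cosetBasis_apply, charAlgHom_single, one_mul]
  -- the defining relation of the matrix `A`
  have hrep : ∀ q' : G ⧸ H, lam * b q' = ∑ q : G ⧸ H, A q q' • b q := by
    intro q'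
    have h1 := (b.sum_repr (lam * b q')).symm
    refine h1.trans (Finset.sum_congr rfl fun q _ => ?_)
    refine congrArg (· • b q) ?_
    rw [hA, LinearMap.toMatrix_apply, LinearMap.mulLeft_apply]
  -- key intertwining identity
  have hstar : ∀ (φ : {φ : G →* ℂˣ // φ.comp H.subtype = ψ}) (q' : G ⧸ H),
      charAlgHom G φ.1 lam * ((φ.1 q'.out : ℂ)) =
        ∑ q : G ⧸ H, ((φ.1 q.out : ℂ)) * M q q' := by
    intro φ q'
    have h1 := congrArg (charAlgHom G φ.1) (hrep q')
    rw [map_mul, hbq, map_sum] at h1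
    have h2 : ∀ q : G ⧸ H, charAlgHom G φ.1 (A q q' • b q) =
        ((φ.1 q.out : ℂ)) * M q q' := by
      intro q
      rw [smul_eq_mdrh_mul, map_mul, charAlgHom_mdrh H φ.1 ψ φ.2, hbq]
      rw [hM, Matrix.map_apply, mul_comm]
    rw [Finset.sum_congr rfl (fun q _ => h2 q)] at h1
    exact h1
  -- the character matrix
  set E := {φ : G →* ℂˣ // φ.comp H.subtype = ψ} with hE
  letI : Fintype E := Fintype.ofFinite _
  set d : E → ℂ := fun φ => charAlgHom G φ.1 lam with hd
  set P : Matrix E (G ⧸ H) ℂ := Matrix.of fun φ q => ((φ.1 q.out : ℂ)) with hP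
  have hPM : P * M = Matrix.diagonal d * P := by
    ext φ q'
    rw [Matrix.mul_apply, Matrix.diagonal_mul]
    exact ((hstar φ q').symm).trans rfl
  -- linear independence of the rows of `P`
  have hrows : LinearIndependent ℂ (fun φ : E => P φ) := by
    rw [Fintype.linearIndependent_iff]
    intro c hc
    have hinj : Function.Injective (fun φ : E => (Units.coeHom ℂ).comp φ.1) := by
      intro φ φ' hφφ
      apply Subtype.ext
      ext g
      exact congrArg (fun f : G →* ℂ => f g) hφφ
    have hLI := (linearIndependent_monoidHom G ℂ).comp _ hinj
    rw [Fintype.linearIndependent_iff] at hLI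
    refine fun φ => hLI c ?_ φ
    funext g
    have hmem : g * (((g : G ⧸ H)).out)⁻¹ ∈ H := mem_of_mul_out_inv H g
    have hval : ∀ φ : E, ((φ.1 g : ℂ)) =
        ((ψ ⟨g * ((g : G ⧸ H)).out⁻¹, hmem⟩ : ℂ)) * P φ (g : G ⧸ H) := by
      intro φ
      have h1 : φ.1 g = φ.1 (g * ((g : G ⧸ H)).out⁻¹) * φ.1 ((g : G ⧸ H)).out := by
        rw [← map_mul, inv_mul_cancel_right]
      have h2 : φ.1 (g * ((g : G ⧸ H)).out⁻¹) = ψ ⟨g * ((g : G ⧸ H)).out⁻¹, hmem⟩ :=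
        DFunLike.congr_fun φ.2 (⟨g * ((g : G ⧸ H)).out⁻¹, hmem⟩ : ↥H)
      rw [h1, h2, Units.val_mul]
      rfl
    have hc' := congrFun hc (g : G ⧸ H)
    simp only [Finset.sum_apply, Pi.smul_apply, Pi.zero_apply, smul_eq_mul] at hc'
    have : ∑ φ : E, c φ • ((fun f : G →* ℂ => (f : G → ℂ)) ∘
        fun φ : E => (Units.coeHom ℂ).comp φ.1) φ g =
        ((ψ ⟨g * ((g : G ⧸ H)).out⁻¹, hmem⟩ : ℂ)) * ∑ φ : E, c φ * P φ (g : G ⧸ H) := by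
      rw [Finset.mul_sum]
      refine Finset.sum_congr rfl fun φ _ => ?_
      show c φ * ((φ.1 g : ℂ)) = _
      rw [hval φ]
      ring
    calc (∑ φ : E, c φ • ((fun f : G →* ℂ => (f : G → ℂ)) ∘
          fun φ : E => (Units.coeHom ℂ).comp φ.1) φ) g
        = ∑ φ : E, c φ • ((fun f : G →* ℂ => (f : G → ℂ)) ∘
          fun φ : E => (Units.coeHom ℂ).comp φ.1) φ g := by
          rw [Finset.sum_apply]; rfl
      _ = ((ψ ⟨g * ((g : G ⧸ H)).out⁻¹, hmem⟩ : ℂ)) * ∑ φ : E, c φ * P φ (g : G ⧸ H) := this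
      _ = 0 := by rw [hc', mul_zero]
  -- counting: `E` has the same cardinality as `G ⧸ H`
  haveI : Finite E := Subtype.finite
  have hcard : Nat.card E = Nat.card (G ⧸ H) := card_extensions H ψ
  obtain ⟨e⟩ : Nonempty ((G ⧸ H) ≃ E) := Finite.card_eq.mp hcard.symm
  set Q : Matrix (G ⧸ H) (G ⧸ H) ℂ := Matrix.of fun q q' => P (e q) q' with hQ
  have hQrows : LinearIndependent ℂ (fun q : G ⧸ H => Q q) :=
    hrows.comp e e.injective
  have hQunit : IsUnit Q := Matrix.linearIndependent_rows_iff_isUnit.mp hQrows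
  have hQM : Q * M = Matrix.diagonal (d ∘ e) * Q := by
    ext q q'
    have h1 := Matrix.ext_iff.mpr hPM (e q) q'
    rw [Matrix.mul_apply, Matrix.diagonal_mul] at h1
    rw [Matrix.mul_apply, Matrix.diagonal_mul]
    exact h1
  have hdet : M.det = ∏ q : G ⧸ H, d (e q) := by
    have h2 := congrArg Matrix.det hQM
    rw [Matrix.det_mul, Matrix.det_mul, Matrix.det_diagonal, mul_comm Q.det] at h2
    have hne : Q.det ≠ 0 := ((Matrix.isUnit_iff_isUnit_det Q).mp hQunit).ne_zero
    have h3 : ∏ i : G ⧸ H, (d ∘ e) i = ∏ q : G ⧸ H, d (e q) := rfl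
    exact mul_right_cancel₀ hne (h2.trans (by rw [h3]))
  -- rewrite the finprod as a finite product over `E`
  have hprod : ∏ᶠ (φ : G →* ℂˣ) (_ : φ.comp H.subtype = ψ), charAlgHom G φ lam
      = ∏ φ : E, d φ := by
    calc ∏ᶠ (φ : G →* ℂˣ) (_ : φ.comp H.subtype = ψ), charAlgHom G φ lam
        = ∏ φ : (G →* ℂˣ), ∏ᶠ (_ : φ.comp H.subtype = ψ), charAlgHom G φ lam :=
          finprod_eq_prod_of_fintype _
      _ = ∏ φ : (G →* ℂˣ), if φ.comp H.subtype = ψ then charAlgHom G φ lam else 1 :=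
          Finset.prod_congr rfl fun φ _ => finprod_eq_if
      _ = ∏ φ ∈ Finset.univ.filter (fun φ : G →* ℂˣ => φ.comp H.subtype = ψ),
            charAlgHom G φ lam := (Finset.prod_filter _ _).symm
      _ = ∏ φ : E, d φ := Finset.prod_subtype _ (by simp) _
  rw [hLHS, hprod, hdet]
  exact Equiv.prod_comp e d
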